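/- Let 𝔤 be a Hilbert–Lie algebra: a real Hilbert space carrying a Lie algebra structure such that each ad(x) = [x, ·] is a bounded linear operator and ⟨[x,y], z⟩ = −⟨y, [x,z]⟩ for all x, y, z. Then 𝔤 contains a proper open invariant convex cone (a nonempty open convex cone Ω ≠ 𝔤 with exp(ad x)(Ω) ⊆ Ω for all x ∈ 𝔤) if and only if the center 𝔷(𝔤) = {z ∈ 𝔤 : [z,y] = 0 for all y} is nonzero. -/

import Mathlib

open scoped RealInnerProductSpace

attribute [local instance high] NormedAddCommGroup.toAddCommGroup
open NormedSpace Nat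

section
variable {g : Type*} [NormedAddCommGroup g] [InnerProductSpace ℝ g] [CompleteSpace g]

omit [CompleteSpace g] in
lemma pow_skew_pair (A : g →L[ℝ] g) (hA : ∀ u v : g, ⟪A u, v⟫ = -⟪u, A v⟫) :
    ∀ (n : ℕ) (u v : g), ⟪(A ^ n) u, v⟫ = ⟪u, ((-A) ^ n) v⟫ := by
  intro n
  induction n with
  | zero => intro u v; simp
  | succ n ih =>
    intro u v
    rw [pow_succ' A n, pow_succ (-A) n]
    simp only [ContinuousLinearMap.mul_apply]
    rw [hA, ih, ← inner_neg_right]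
    rw [ContinuousLinearMap.neg_apply, map_neg]

lemma exp_apply_tsum (A : g →L[ℝ] g) (u : g) :
    exp A u = ∑' n : ℕ, (n ! : ℝ)⁻¹ • (A ^ n) u := by
  have hs : Summable fun n : ℕ => (n ! : ℝ)⁻¹ • A ^ n := expSeries_summable' A
  have := (ContinuousLinearMap.apply ℝ g u).map_tsum hs
  rw [exp_eq_tsum ℝ]
  simpa using this

lemma summable_exp_apply (A : g →L[ℝ] g) (u : g) :
    Summable fun n : ℕ => (n ! : ℝ)⁻¹ • (A ^ n) u := by
  have hs : Summable fun n : ℕ => (n ! : ℝ)⁻¹ • A ^ n := expSeries_summable' A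
  have := hs.map (ContinuousLinearMap.apply ℝ g u) (ContinuousLinearMap.apply ℝ g u).continuous
  simpa [Function.comp_def] using this

lemma exp_skew_pair (A : g →L[ℝ] g) (hA : ∀ u v : g, ⟪A u, v⟫ = -⟪u, A v⟫) (u v : g) :
    ⟪exp A u, v⟫ = ⟪u, exp (-A) v⟫ := by
  rw [exp_apply_tsum, exp_apply_tsum]
  have h1 := ((innerSL ℝ (E := g)).flip v).map_tsum (summable_exp_apply A u)
  have h2 := ((innerSL ℝ (E := g)) u).map_tsum (summable_exp_apply (-A) v)
  simp only [ContinuousLinearMap.flip_apply, innerSL_apply_apply] at h1 h2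
  rw [h1, h2]
  congr 1
  ext n
  rw [real_inner_smul_left, real_inner_smul_right, pow_skew_pair A hA]

lemma exp_fix (A : g →L[ℝ] g) (u : g) (h : A u = 0) : exp A u = u := by
  rw [exp_apply_tsum]
  rw [tsum_eq_single 0]
  · simp
  · intro n hn
    obtain ⟨m, rfl⟩ := Nat.exists_eq_succ_of_ne_zero hn
    have : (A ^ (m + 1)) u = 0 := by
      rw [pow_succ]
      simp [ContinuousLinearMap.mul_apply, h]
    simp [this]

lemma exp_neg_mul_exp_apply (A : g →L[ℝ] g) (u : g) : exp (-A) (exp A u) = u := by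
  have h : exp (-A) * exp A = 1 := by
    rw [← exp_add_of_commute_of_mem_ball (𝕂 := ℝ) ((Commute.refl A).neg_left)
      ((expSeries_radius_eq_top ℝ (g →L[ℝ] g)).symm ▸ edist_lt_top _ _)
      ((expSeries_radius_eq_top ℝ (g →L[ℝ] g)).symm ▸ edist_lt_top _ _)]
    simp [exp_zero]
  have := congrArg (fun T : g →L[ℝ] g => T u) h
  simpa [ContinuousLinearMap.mul_apply] using this

lemma exp_skew_isometry (A : g →L[ℝ] g) (hA : ∀ u v : g, ⟪A u, v⟫ = -⟪u, A v⟫) (u : g) :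
    ‖exp A u‖ = ‖u‖ := by
  have h : ⟪exp A u, exp A u⟫ = ⟪u, u⟫ := by
    rw [exp_skew_pair A hA, exp_neg_mul_exp_apply]
  rw [real_inner_self_eq_norm_sq, real_inner_self_eq_norm_sq] at h
  nlinarith [norm_nonneg (exp A u), norm_nonneg u]
end
section LieHelpers
variable {g : Type*} [LieRing g]


lemma hl_swap (y : g) : ∃ y' : g, ∀ m : g, ⁅m, y⁆ = ⁅y', m⁆ :=
  ⟨-y, fun m => by rw [neg_lie, lie_skew]⟩

lemma hl_left_to_right (z e : g) (hzz : ∀ m : g, ⁅z, m⁆ = e) : ∀ m : g, ⁅m, z⁆ = e := by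
  have he : e = 0 := (hzz 0).symm.trans (lie_zero z)
  intro m
  rw [← lie_skew, hzz m, he, neg_zero]

lemma hl_right_to_left (v e : g) (hvv : ∀ m : g, ⁅m, v⁆ = e) : ∀ m : g, ⁅v, m⁆ = e := by
  have he : e = 0 := (hvv 0).symm.trans (zero_lie v)
  intro m
  rw [← lie_skew, hvv m, he, neg_zero]
end LieHelpers

/-- A Hilbert–Lie algebra contains a proper open invariant convex cone if and only if
its center is nonzero. -/
theorem hilbert_lie_proper_open_invariant_cone_iff_center_ne_bot
    {g : Type*} [NormedAddCommGroup g] [InnerProductSpace ℝ g] [CompleteSpace g]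
    [LieRing g] [LieAlgebra ℝ g]
    (ad : g → g →L[ℝ] g) (had : ∀ x y : g, ad x y = ⁅x, y⁆)
    (hskew : ∀ x y z : g, ⟪⁅x, y⁆, z⟫ = -⟪y, ⁅x, z⁆⟫) :
    (∃ Ω : Set g, Ω.Nonempty ∧ IsOpen Ω ∧ Convex ℝ Ω ∧
        (∀ t : ℝ, 0 < t → ∀ x ∈ Ω, t • x ∈ Ω) ∧ Ω ≠ Set.univ ∧
        ∀ x : g, (NormedSpace.exp (ad x) : g →L[ℝ] g) '' Ω ⊆ Ω) ↔
      ∃ z : g, z ≠ 0 ∧ ∀ y : g, ⁅z, y⁆ = 0 := by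
  have hadskew : ∀ x : g, ∀ u v : g, ⟪(ad x) u, v⟫ = -⟪u, (ad x) v⟫ := by
    intro x u v; rw [had, had]; exact hskew x u v
  -- first-slot linearity of the bracket w.r.t. the normed operations
  have hsl : ∀ (t : ℝ) (x m : g), ⁅t • x, m⁆ = t • ⁅x, m⁆ := by
    intro t x m
    obtain ⟨m₀, hm₀⟩ := hl_swap m
    rw [hm₀ (t • x), hm₀ x, ← had, ← had, map_smul]
  have had_neg : ∀ y : g, ad (-y) = -(ad y) := by
    intro y
    ext m
    rw [ContinuousLinearMap.neg_apply, had, had, ← neg_one_smul ℝ y, hsl, neg_one_smul]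
  constructor
  · -- hard direction
    rintro ⟨Ω, ⟨p₀, hp₀⟩, hopen, hconv, hcone, hne, hinv⟩
    have hexp_mem : ∀ x : g, ∀ w ∈ Ω, exp (ad x) w ∈ Ω := fun x w hw => hinv x ⟨w, hw, rfl⟩
    -- moving inner products across exp
    have hpair : ∀ y : g, ∀ u w : g, ⟪u, exp (ad y) w⟫ = ⟪exp (ad (-y)) u, w⟫ := by
      intro y u w
      rw [had_neg, exp_skew_pair (-(ad y)) (fun u v => by
        simp only [ContinuousLinearMap.neg_apply, inner_neg_left, inner_neg_right,
          hadskew y u v, neg_neg]) u w, neg_neg]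
    -- the dual cone
    set D : Set g := {w | ∀ x ∈ Ω, 0 ≤ ⟪x, w⟫} with hD
    have hD_inv : ∀ (y : g), ∀ w ∈ D, exp (ad y) w ∈ D := by
      intro y w hw x hx
      rw [hpair y x w]
      exact hw _ (hexp_mem (-y) x hx)
    -- small ball inside Ω
    obtain ⟨ε, hε, hball⟩ := Metric.isOpen_iff.mp hopen p₀ hp₀
    have hlow : ∀ w ∈ D, ε / 2 * ‖w‖ ≤ ⟪p₀, w⟫ := by
      intro w hw
      rcases eq_or_ne w 0 with rfl | hw0
      · simp
      · have hwn : (0:ℝ) < ‖w‖ := norm_pos_iff.mpr hw0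
        have hx : p₀ - ((ε / 2) * ‖w‖⁻¹) • w ∈ Ω := by
          apply hball
          rw [Metric.mem_ball, dist_eq_norm]
          have h : p₀ - (ε / 2 * ‖w‖⁻¹) • w - p₀ = -((ε / 2 * ‖w‖⁻¹) • w) := by abel
          rw [h, norm_neg, norm_smul, Real.norm_eq_abs, abs_of_pos (by positivity)]
          rw [mul_assoc, inv_mul_cancel₀ hwn.ne', mul_one]
          linarith
        have h0 := hw _ hx
        rw [inner_sub_left, real_inner_smul_left, real_inner_self_eq_norm_mul_norm] at h0
        have h : ε / 2 * ‖w‖⁻¹ * (‖w‖ * ‖w‖) = ε / 2 * ‖w‖ := by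
          field_simp
        rw [h] at h0
        linarith
    -- separating functional
    obtain ⟨q, hq⟩ := (Set.ne_univ_iff_exists_notMem Ω).mp hne
    obtain ⟨f, hf⟩ := geometric_hahn_banach_open_point hconv hopen hq
    have hf_nonpos : ∀ a ∈ Ω, f a ≤ 0 := by
      intro a ha
      by_contra h
      push_neg at h
      have ht : 0 < (|f q| + 1) / f a := by positivity
      have h2 := hf _ (hcone _ ht a ha)
      rw [map_smul, smul_eq_mul] at h2
      have h3 : (|f q| + 1) / f a * f a = |f q| + 1 := by field_simp
      rw [h3] at h2
      have := le_abs_self (f q)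
      linarith
    set z : g := (InnerProductSpace.toDual ℝ g).symm (-f) with hzdef
    have hz_inner : ∀ x : g, ⟪z, x⟫ = -(f x) := by
      intro x
      rw [hzdef, InnerProductSpace.toDual_symm_apply]
      rfl
    have hzne : z ≠ 0 := by
      intro h
      have h0 : ⟪z, p₀⟫ = 0 := by rw [h, inner_zero_left]
      have h1 : ⟪z, q⟫ = 0 := by rw [h, inner_zero_left]
      rw [hz_inner] at h0 h1
      have h2 := hf p₀ hp₀
      have hfp : f p₀ = 0 := by linarith
      have hfq : f q = 0 := by linarith
      rw [hfp, hfq] at h2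
      exact lt_irrefl _ h2
    have hzD : z ∈ D := by
      intro x hx
      rw [real_inner_comm, hz_inner]
      have := hf_nonpos x hx
      linarith
    -- the orbit of z
    set O : Set g := {w | ∃ l : List g, w = l.foldr (fun y v => exp (ad y) v) z} with hO
    have hzO : z ∈ O := ⟨[], rfl⟩
    have hO_inv : ∀ (y : g), ∀ w ∈ O, exp (ad y) w ∈ O := by
      rintro y w ⟨l, rfl⟩
      exact ⟨y :: l, rfl⟩
    have hO_prop : ∀ w ∈ O, w ∈ D ∧ ‖w‖ = ‖z‖ := by
      rintro w ⟨l, rfl⟩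
      induction l with
      | nil => exact ⟨hzD, rfl⟩
      | cons y l ih =>
        refine ⟨hD_inv y _ ih.1, ?_⟩
        rw [List.foldr_cons, exp_skew_isometry (ad y) (hadskew y) _]
        exact ih.2
    -- convex closed hull of the orbit
    set K : Set g := closure (convexHull ℝ O) with hK
    have hKconv : Convex ℝ K := (convex_convexHull ℝ O).closure
    have hKclosed : IsClosed K := isClosed_closure
    have hzK : z ∈ K := subset_closure (subset_convexHull ℝ O hzO)
    have hlin : IsLinearMap ℝ (fun w : g => ⟪p₀, w⟫) :=
      ⟨fun a b => inner_add_right _ _ _, fun c a => real_inner_smul_right _ _ _⟩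
    have hK_low : ∀ w ∈ K, ε / 2 * ‖z‖ ≤ ⟪p₀, w⟫ := by
      have hA_cl : IsClosed {w : g | ε / 2 * ‖z‖ ≤ ⟪p₀, w⟫} :=
        isClosed_le continuous_const (Continuous.inner continuous_const continuous_id)
      have hA_cv : Convex ℝ {w : g | ε / 2 * ‖z‖ ≤ ⟪p₀, w⟫} := convex_halfSpace_ge hlin _
      have hOA : O ⊆ {w : g | ε / 2 * ‖z‖ ≤ ⟪p₀, w⟫} := by
        intro w hw
        obtain ⟨hwD, hwn⟩ := hO_prop w hw
        have h := hlow w hwD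
        rw [hwn] at h
        exact h
      intro w hw
      exact closure_minimal (convexHull_min hOA hA_cv) hA_cl hw
    have hK_inv : ∀ (y : g), ∀ w ∈ K, exp (ad y) w ∈ K := by
      intro y w hw
      set E := exp (ad y) with hE
      have hElin : IsLinearMap ℝ (⇑E) := ⟨E.map_add, E.map_smul⟩
      have h1 : ⇑E '' convexHull ℝ O ⊆ convexHull ℝ O := by
        rw [hElin.image_convexHull]
        exact convexHull_mono (by
          rintro _ ⟨u, hu, rfl⟩
          exact hO_inv y u hu)
      have h2 : E w ∈ closure (⇑E '' convexHull ℝ O) := by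
        exact image_closure_subset_closure_image (s := convexHull ℝ O) (f := ⇑E)
          E.continuous ⟨w, hw, rfl⟩
      exact closure_mono h1 h2
    -- minimal norm point
    obtain ⟨v, hvK, hv⟩ := exists_norm_eq_iInf_of_complete_convex ⟨z, hzK⟩
      hKclosed.isComplete hKconv 0
    have hδ_le : ∀ u ∈ K, ‖v‖ ≤ ‖u‖ := by
      intro u hu
      have h1 : ‖(0:g) - v‖ = ⨅ w : K, ‖(0:g) - w‖ := hv
      have h2 : (⨅ w : K, ‖(0:g) - w‖) ≤ ‖(0:g) - u‖ :=
        ciInf_le (⟨0, Set.forall_mem_range.2 fun _ => norm_nonneg _⟩ :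
          BddBelow (Set.range fun w : K => ‖(0:g) - w‖)) ⟨u, hu⟩
      simpa using h1.le.trans h2
    have huniq : ∀ u ∈ K, ‖u‖ = ‖v‖ → u = v := by
      intro u hu hnorm
      have hm : (1/2 : ℝ) • u + (1/2 : ℝ) • v ∈ K :=
        hKconv hu hvK (by norm_num) (by norm_num) (by norm_num)
      have hmn : ‖v‖ ≤ ‖(1/2 : ℝ) • u + (1/2 : ℝ) • v‖ := hδ_le _ hm
      have hms : (1/2 : ℝ) • u + (1/2 : ℝ) • v = (1/2 : ℝ) • (u + v) := by
        rw [smul_add]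
      rw [hms, norm_smul] at hmn
      simp only [Real.norm_eq_abs] at hmn
      rw [abs_of_pos (by norm_num : (0:ℝ) < 1/2)] at hmn
      have hpar := parallelogram_law_with_norm ℝ u v
      rw [hnorm] at hpar
      have h4 : 2 * ‖v‖ ≤ ‖u + v‖ := by linarith
      have h5 : 4 * (‖v‖ * ‖v‖) ≤ ‖u + v‖ * ‖u + v‖ := by nlinarith [norm_nonneg v]
      have h6 : ‖u - v‖ ≤ 0 := by nlinarith [norm_nonneg (u - v)]
      have h7 : ‖u - v‖ = 0 := le_antisymm h6 (norm_nonneg _)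
      rw [norm_sub_eq_zero_iff] at h7
      exact h7
    -- v is fixed by all exp(t ad x), hence annihilated by each ad x
    have hfix : ∀ x : g, (ad x) v = 0 := by
      intro x
      have hvfix : ∀ t : ℝ, exp (t • ad x) v = v := by
        intro t
        have hsm : t • ad x = ad (t • x) := by
          ext u
          rw [ContinuousLinearMap.smul_apply, had, had, hsl]
        rw [hsm]
        apply huniq
        · exact hK_inv (t • x) v hvK
        · exact exp_skew_isometry (ad (t • x)) (hadskew (t • x)) v
      have hd : HasDerivAt (fun t : ℝ => exp (t • ad x) v)
          ((exp ((0:ℝ) • ad x) * ad x) v) 0 := by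
        have h1 := hasDerivAt_exp_smul_const (𝕂 := ℝ) (ad x) (0 : ℝ)
        have h2 : HasDerivAt (fun _ : ℝ => v) 0 (0:ℝ) := hasDerivAt_const _ _
        have h3 := h1.clm_apply h2
        simpa using h3
      have hconst : HasDerivAt (fun t : ℝ => exp (t • ad x) v) 0 0 := by
        have h : (fun t : ℝ => exp (t • ad x) v) = fun _ => v := funext hvfix
        rw [h]
        exact hasDerivAt_const _ _
      have h := hd.unique hconst
      simpa [exp_zero] using h
    refine ⟨v, ?_, ?_⟩
    · intro h
      have h1 := hK_low v hvK
      rw [h, inner_zero_right] at h1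
      have hzn : (0:ℝ) < ‖z‖ := norm_pos_iff.mpr hzne
      nlinarith
    · intro y
      have h1 : ∀ m : g, ⁅m, v⁆ = (0:g) := by
        intro m
        rw [← had]
        exact hfix m
      exact hl_right_to_left v 0 h1 y
  · -- easy direction
    rintro ⟨z, hz, hcz⟩
    have hxz : ∀ x : g, ⁅x, z⁆ = (0:g) := hl_left_to_right z 0 hcz
    refine ⟨{x | 0 < ⟪x, z⟫}, ⟨z, by
      have h : (0:ℝ) < ⟪z, z⟫ := by
        rw [real_inner_self_eq_norm_sq]
        exact pow_pos (norm_pos_iff.mpr hz) 2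
      simpa using h⟩, ?_, ?_, ?_, ?_, ?_⟩
    · exact isOpen_lt continuous_const (Continuous.inner continuous_id continuous_const)
    · exact convex_halfSpace_gt (f := fun x : g => ⟪x, z⟫)
        ⟨fun a b => inner_add_left a b z, fun c a => real_inner_smul_left a z c⟩ 0
    · intro t ht x hx
      rw [Set.mem_setOf_eq, real_inner_smul_left]
      exact mul_pos ht hx
    · intro h
      have h1 : (0:g) ∈ {x : g | 0 < ⟪x, z⟫} := h ▸ Set.mem_univ 0
      simp at h1
    · rintro x _ ⟨w, hw, rfl⟩
      rw [Set.mem_setOf_eq, exp_skew_pair (ad x) (hadskew x) w z]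
      have hfixz : (-(ad x)) z = 0 := by
        rw [ContinuousLinearMap.neg_apply, had, hxz x, neg_zero]
      rw [exp_fix _ _ hfixz]
      exact hw
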